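/- Let V be a topological real vector space, F ⊆ V a subset, and M ⊆ V a subset such that F + M ⊆ F. Define F̃ = {x ∈ V : −x ∉ interior F}. Then F̃ + M ⊆ F̃. -/

import Mathlib

open Pointwise

/-- If `M` is a monotonicity set for `F` (i.e. `F + M ⊆ F`), then `M` is a monotonicity set
for the Dirichlet dual `F̃ = {x | -x ∉ interior F}`. -/
theorem stmt_4 {V : Type*} [AddCommGroup V] [Module ℝ V] [TopologicalSpace V]
    [IsTopologicalAddGroup V] [ContinuousSMul ℝ V]
    (F M : Set V) (hFM : F + M ⊆ F) :
    {x : V | -x ∉ interior F} + M ⊆ {x : V | -x ∉ interior F} := by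
  rintro z ⟨x, hx, m, hm, rfl⟩
  intro h
  apply hx
  have himg : (· + m) '' F ⊆ F := by
    rintro y ⟨a, ha, rfl⟩
    exact hFM ⟨a, ha, m, hm, rfl⟩
  have hie : (· + m) '' interior F = interior ((· + m) '' F) :=
    (Homeomorph.addRight m).image_interior F
  have key : (· + m) '' interior F ⊆ interior F := by
    rw [hie]; exact interior_mono himg
  have hx' : -x = -(x + m) + m := by abel
  rw [hx']
  exact key ⟨-(x + m), h, rfl⟩
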